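/- Let R be a ring and n a non-negative integer. A left R-module M is n-weak injective if and only if its character module M* = Hom_ℤ(M, ℚ/ℤ) is an n-weak flat right R-module. -/

import Mathlib

/-! Definitions for `n`-weak injective and `n`-weak flat modules over an arbitrary
(associative, unital, possibly noncommutative) ring `R`, following
Amini–Amzil–Bennis, "On n-weak injective and n-weak flat modules".

Left `R`-modules are types with `[Module R M]`; right `R`-modules are types with
`[Module Rᵐᵒᵖ M]`.  `Ext` is the derived functor of the ℤ-linear Yoneda functor on
`ModuleCat R`, and `Tor` is obtained as the left derived functor of the balanced
tensor product `N ⊗_R -` (constructed as a quotient of the ℤ-tensor product). -/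

open CategoryTheory Limits TensorProduct

noncomputable section

universe u

namespace NWeak

variable (R : Type u) [Ring R]

/-- A left `R`-module `U` is *`n`-super finitely presented* if it admits a resolution
`⋯ → F_{n+1} → F_n → ⋯ → F_1 → F_0 → U → 0` by projective modules in which `F_i` is
finitely generated for every `i ≥ n`. -/
def IsNSuperFP (n : ℕ) (U : Type u) [AddCommGroup U] [Module R U] : Prop :=
  ∃ (F : ℕ → ModuleCat.{u} R) (d : ∀ i, F (i + 1) ⟶ F i) (ε : F 0 →ₗ[R] U),
    (∀ i, Module.Projective R (F i)) ∧
    (∀ i, n ≤ i → Module.Finite R (F i)) ∧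
    Function.Surjective ε ∧
    Function.Exact (d 0) ε ∧
    (∀ i, Function.Exact (d (i + 1)) (d i))

/-- A left `R`-module `K` is *special super finitely presented* (relative to `n`) if
there are an `n`-super finitely presented module `U` and a resolution
`⋯ → F_{n+1} → F_n → ⋯ → F_0 → U → 0` as above such that `K ≅ Im (F_n → F_{n-1})`,
where for `n = 0` we read `K_{-1} := U`. -/
def IsSpecialSFP (n : ℕ) (K : Type u) [AddCommGroup K] [Module R K] : Prop :=
  ∃ (F : ℕ → ModuleCat.{u} R) (d : ∀ i, F (i + 1) ⟶ F i) (U : ModuleCat.{u} R)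
    (ε : F 0 ⟶ U),
    (∀ i, Module.Projective R (F i)) ∧
    (∀ i, n ≤ i → Module.Finite R (F i)) ∧
    Function.Surjective ε ∧
    Function.Exact (d 0) ε ∧
    (∀ i, Function.Exact (d (i + 1)) (d i)) ∧
    (match n with
      | 0 => Nonempty (K ≃ₗ[R] U)
      | m + 1 => Nonempty (K ≃ₗ[R] LinearMap.range (d m).hom))

/-- Vanishing of `Ext_R^i(K, M)` for left `R`-modules. -/
def extVanish (i : ℕ) (K : Type u) [AddCommGroup K] [Module R K]
    (M : Type u) [AddCommGroup M] [Module R M] : Prop :=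
  Subsingleton (((Ext ℤ (ModuleCat.{u} R) i).obj
    (Opposite.op (ModuleCat.of R K))).obj (ModuleCat.of R M))

/-- A left `R`-module `M` is *`n`-weak injective* if `Ext_R^{n+1}(U, M) = 0` for every
`n`-super finitely presented left `R`-module `U`. -/
def IsNWeakInjective (n : ℕ) (M : Type u) [AddCommGroup M] [Module R M] : Prop :=
  ∀ (U : ModuleCat.{u} R), IsNSuperFP R n U → extVanish R (n + 1) U M

/-- The left `R`-module `M` has *`n`-weak injective dimension at most `k`* if
`Ext_R^{k+1}(K, M) = 0` for every special super finitely presented left `R`-module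
`K`. -/
def WIDimLE (n k : ℕ) (M : Type u) [AddCommGroup M] [Module R M] : Prop :=
  ∀ (K : ModuleCat.{u} R), IsSpecialSFP R n K → extVanish R (k + 1) K M

/-! ### The balanced tensor product and Tor -/

/-- The additive subgroup of `N ⊗[ℤ] K` generated by the balancing relations
`(n·r) ⊗ k - n ⊗ (r·k)`. -/
def balRel (N : Type u) [AddCommGroup N] [Module Rᵐᵒᵖ N]
    (K : Type u) [AddCommGroup K] [Module R K] : AddSubgroup (N ⊗[ℤ] K) :=
  AddSubgroup.closure
    {x | ∃ (a : N) (r : R) (b : K),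
      x = (MulOpposite.op r • a) ⊗ₜ[ℤ] b - a ⊗ₜ[ℤ] (r • b)}

/-- The balanced tensor product `N ⊗_R K` of a right `R`-module `N` and a left
`R`-module `K`, realized as a quotient of `N ⊗[ℤ] K`. -/
def RTensor (N : Type u) [AddCommGroup N] [Module Rᵐᵒᵖ N]
    (K : Type u) [AddCommGroup K] [Module R K] : Type u :=
  (N ⊗[ℤ] K) ⧸ balRel R N K

instance (N : Type u) [AddCommGroup N] [Module Rᵐᵒᵖ N]
    (K : Type u) [AddCommGroup K] [Module R K] : AddCommGroup (RTensor R N K) :=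
  inferInstanceAs (AddCommGroup ((N ⊗[ℤ] K) ⧸ balRel R N K))

variable {R}

/-- Functoriality of the balanced tensor product in the left-module variable. -/
def balMapRight (N : Type u) [AddCommGroup N] [Module Rᵐᵒᵖ N]
    {K K' : Type u} [AddCommGroup K] [Module R K] [AddCommGroup K'] [Module R K']
    (f : K →ₗ[R] K') : RTensor R N K →+ RTensor R N K' :=
  QuotientAddGroup.map _ _
    (TensorProduct.map (LinearMap.id : N →ₗ[ℤ] N) (f.restrictScalars ℤ)).toAddMonoidHom
    (by
      rw [balRel, AddSubgroup.closure_le]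
      rintro x ⟨a, r, b, rfl⟩
      simp only [SetLike.mem_coe, AddSubgroup.mem_comap, LinearMap.toAddMonoidHom_coe,
        map_sub, TensorProduct.map_tmul, LinearMap.coe_restrictScalars, LinearMap.id_coe,
        id_eq, LinearMap.map_smul]
      exact AddSubgroup.subset_closure ⟨a, r, f b, rfl⟩)

/-- Functoriality of the balanced tensor product in the right-module variable. -/
def balMapLeft (K : Type u) [AddCommGroup K] [Module R K]
    {N N' : Type u} [AddCommGroup N] [Module Rᵐᵒᵖ N] [AddCommGroup N'] [Module Rᵐᵒᵖ N']
    (g : N →ₗ[Rᵐᵒᵖ] N') : RTensor R N K →+ RTensor R N' K :=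
  QuotientAddGroup.map _ _
    (TensorProduct.map (g.restrictScalars ℤ) (LinearMap.id : K →ₗ[ℤ] K)).toAddMonoidHom
    (by
      rw [balRel, AddSubgroup.closure_le]
      rintro x ⟨a, r, b, rfl⟩
      simp only [SetLike.mem_coe, AddSubgroup.mem_comap, LinearMap.toAddMonoidHom_coe,
        map_sub, TensorProduct.map_tmul, LinearMap.coe_restrictScalars, LinearMap.id_coe,
        id_eq, LinearMap.map_smul]
      exact AddSubgroup.subset_closure ⟨g a, r, b, rfl⟩)

lemma balMapRight_mk (N : Type u) [AddCommGroup N] [Module Rᵐᵒᵖ N]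
    {K K' : Type u} [AddCommGroup K] [Module R K] [AddCommGroup K'] [Module R K']
    (f : K →ₗ[R] K') (y : N ⊗[ℤ] K) :
    balMapRight N f (QuotientAddGroup.mk y)
      = QuotientAddGroup.mk (TensorProduct.map (LinearMap.id : N →ₗ[ℤ] N)
          (f.restrictScalars ℤ) y) := rfl

variable (R)

/-- The functor `K ↦ N ⊗_R K` from left `R`-modules to abelian groups, for a fixed
right `R`-module `N`. -/
def tensorFunctor (N : Type u) [AddCommGroup N] [Module Rᵐᵒᵖ N] :
    ModuleCat.{u} R ⥤ AddCommGrpCat.{u} where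
  obj K := AddCommGrpCat.of (RTensor R N K)
  map {K K'} f := AddCommGrpCat.ofHom (balMapRight N f.hom)
  map_id K := by
    refine AddCommGrpCat.ext fun x => ?_
    refine QuotientAddGroup.induction_on x fun y => ?_
    show balMapRight N (LinearMap.id) (QuotientAddGroup.mk y) = QuotientAddGroup.mk y
    rw [balMapRight_mk]
    congr 1
    refine TensorProduct.induction_on y (by simp) (fun a b => by simp) ?_
    intro s t hs ht
    simp_all [map_add]
  map_comp {K K' K''} f g := by
    refine AddCommGrpCat.ext fun x => ?_
    refine QuotientAddGroup.induction_on x fun y => ?_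
    show balMapRight N (g.hom.comp f.hom) (QuotientAddGroup.mk y)
      = balMapRight N g.hom (balMapRight N f.hom (QuotientAddGroup.mk y))
    rw [balMapRight_mk, balMapRight_mk, balMapRight_mk]
    congr 1
    refine TensorProduct.induction_on y (by simp) (fun a b => by simp) ?_
    intro s t hs ht
    simp_all [map_add]

instance (N : Type u) [AddCommGroup N] [Module Rᵐᵒᵖ N] : (tensorFunctor R N).Additive where
  map_add {K K'} {f g} := by
    refine AddCommGrpCat.ext fun x => ?_
    refine QuotientAddGroup.induction_on x fun y => ?_
    show balMapRight N (f + g).hom (QuotientAddGroup.mk y)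
      = balMapRight N f.hom (QuotientAddGroup.mk y) + balMapRight N g.hom (QuotientAddGroup.mk y)
    rw [balMapRight_mk, balMapRight_mk, balMapRight_mk]
    refine (congrArg (QuotientAddGroup.mk (s := balRel R N K')) ?_).trans
      (QuotientAddGroup.mk_add ..)
    refine TensorProduct.induction_on y (by simp)
      (fun a b => by
        simp only [TensorProduct.map_tmul, LinearMap.coe_restrictScalars, LinearMap.id_coe, id_eq]
        rw [show (f + g) b = f b + g b from rfl, TensorProduct.tmul_add]) ?_
    intro s t hs ht
    simp_all [map_add]
    abel

/-- Vanishing of `Tor_i^R(N, K)` for a right `R`-module `N` and a left `R`-module `K`: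
the `i`-th left derived functor of `N ⊗_R -` vanishes at `K`. -/
def torVanish (i : ℕ) (N : Type u) [AddCommGroup N] [Module Rᵐᵒᵖ N]
    (K : Type u) [AddCommGroup K] [Module R K] : Prop :=
  Subsingleton (((tensorFunctor R N).leftDerived i).obj (ModuleCat.of R K))

/-- A right `R`-module `N` is *`n`-weak flat* if `Tor^R_{n+1}(N, U) = 0` for every
`n`-super finitely presented left `R`-module `U`. -/
def IsNWeakFlat (n : ℕ) (N : Type u) [AddCommGroup N] [Module Rᵐᵒᵖ N] : Prop :=
  ∀ (U : ModuleCat.{u} R), IsNSuperFP R n U → torVanish R (n + 1) N U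

/-- The right `R`-module `N` has *`n`-weak flat dimension at most `k`* if
`Tor^R_{k+1}(N, K) = 0` for every special super finitely presented left `R`-module
`K`. -/
def WFDimLE (n k : ℕ) (N : Type u) [AddCommGroup N] [Module Rᵐᵒᵖ N] : Prop :=
  ∀ (K : ModuleCat.{u} R), IsSpecialSFP R n K → torVanish R (k + 1) N K

/-! ### Character modules -/

/-- The character module `M⋆ = Hom_ℤ(M, ℚ/ℤ)` of a left `R`-module is a right
`R`-module via `(f · r) (m) = f (r · m)`. -/
instance charModuleRight (M : Type u) [AddCommGroup M] [Module R M] :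
    Module Rᵐᵒᵖ (CharacterModule M) where
  smul ρ f := f.comp (DistribMulAction.toAddMonoidHom M ρ.unop)
  one_smul f := CharacterModule.ext _ fun m => congrArg f (one_smul R m)
  mul_smul ρ σ f := CharacterModule.ext _ fun m => congrArg f (mul_smul σ.unop ρ.unop m)
  smul_zero ρ := CharacterModule.ext _ fun _ => rfl
  smul_add ρ f g := CharacterModule.ext _ fun _ => rfl
  add_smul ρ σ f := CharacterModule.ext _ fun m => by
    show f ((ρ.unop + σ.unop) • m) = f (ρ.unop • m) + f (σ.unop • m)
    rw [add_smul, map_add]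
  zero_smul f := CharacterModule.ext _ fun m => by
    show f ((0 : R) • m) = 0
    rw [zero_smul, map_zero]

/-- The character module `N⋆ = Hom_ℤ(N, ℚ/ℤ)` of a right `R`-module is a left
`R`-module via `(r · f) (m) = f (m · r)`. -/
instance charModuleLeft (N : Type u) [AddCommGroup N] [Module Rᵐᵒᵖ N] :
    Module R (CharacterModule N) where
  smul r f := f.comp (DistribMulAction.toAddMonoidHom N (MulOpposite.op r))
  one_smul f := CharacterModule.ext _ fun m => congrArg f (one_smul Rᵐᵒᵖ m)
  mul_smul r s f := CharacterModule.ext _ fun m => congrArg f (by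
    show (MulOpposite.op (r * s)) • m = (MulOpposite.op s) • (MulOpposite.op r) • m
    rw [← mul_smul, MulOpposite.op_mul])
  smul_zero r := CharacterModule.ext _ fun _ => rfl
  smul_add r f g := CharacterModule.ext _ fun _ => rfl
  add_smul r s f := CharacterModule.ext _ fun m => by
    show f ((MulOpposite.op r + MulOpposite.op s) • m)
      = f ((MulOpposite.op r) • m) + f ((MulOpposite.op s) • m)
    rw [add_smul, map_add]
  zero_smul f := CharacterModule.ext _ fun m => by
    show f ((0 : Rᵐᵒᵖ) • m) = 0
    rw [zero_smul, map_zero]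

/-! ### Purity and flatness -/

/-- A submodule `N` of a left `R`-module `M` is *pure* if for every right `R`-module
`L` the induced map `L ⊗_R N → L ⊗_R M` is injective. -/
def IsPureSubmodule (M : Type u) [AddCommGroup M] [Module R M] (N : Submodule R M) :
    Prop :=
  ∀ (L : Type u) [AddCommGroup L] [Module Rᵐᵒᵖ L],
    Function.Injective (balMapRight L N.subtype)

/-- A submodule `N` of a right `R`-module `M` is *pure* if for every left `R`-module
`L` the induced map `N ⊗_R L → M ⊗_R L` is injective. -/
def IsPureSubmoduleRight (M : Type u) [AddCommGroup M] [Module Rᵐᵒᵖ M]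
    (N : Submodule Rᵐᵒᵖ M) : Prop :=
  ∀ (L : Type u) [AddCommGroup L] [Module R L],
    Function.Injective (balMapLeft L N.subtype)

/-- A left `R`-module `M` is *flat* if tensoring with `M` preserves injectivity of
maps of right `R`-modules. -/
def IsFlatLeft (M : Type u) [AddCommGroup M] [Module R M] : Prop :=
  ∀ (A B : Type u) [AddCommGroup A] [Module Rᵐᵒᵖ A] [AddCommGroup B] [Module Rᵐᵒᵖ B]
    (g : A →ₗ[Rᵐᵒᵖ] B), Function.Injective g → Function.Injective (balMapLeft M g)

/-- The left `R`-module `K` has *projective dimension at most `m`*: there is an exact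
sequence `0 → P_m → ⋯ → P_1 → P_0 → K → 0` with all `P_i` projective (encoded by a
projective resolution vanishing in degrees `> m`). -/
def ProjDimLE (K : Type u) [AddCommGroup K] [Module R K] (m : ℕ) : Prop :=
  ∃ (P : ℕ → ModuleCat.{u} R) (d : ∀ i, P (i + 1) ⟶ P i) (ε : P 0 →ₗ[R] K),
    (∀ i, Module.Projective R (P i)) ∧
    Function.Surjective ε ∧
    Function.Exact (d 0) ε ∧
    (∀ i, Function.Exact (d (i + 1)) (d i)) ∧
    (∀ i, m < i → Subsingleton (P i))

end NWeak

namespace NWeakProof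

open NWeak


/-- Dual of an `AddMonoidHom` on character modules. -/
def cdual {A B : Type*} [AddCommGroup A] [AddCommGroup B] (f : A →+ B) :
    CharacterModule B →+ CharacterModule A where
  toFun g := (g : B →+ _).comp f
  map_zero' := rfl
  map_add' _ _ := rfl

@[simp] lemma cdual_apply {A B : Type*} [AddCommGroup A] [AddCommGroup B] (f : A →+ B)
    (g : CharacterModule B) (a : A) : cdual f g a = g (f a) := rfl

theorem exact_cdual_of_exact {A B C : Type*} [AddCommGroup A] [AddCommGroup B] [AddCommGroup C]
    {u : A →+ B} {v : B →+ C} (h : Function.Exact u v) :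
    Function.Exact (cdual v) (cdual u) := by
  intro f
  constructor
  · intro hf
    -- f kills ker v, factor through range v and extend
    have hker : ∀ b, b ∈ LinearMap.ker v.toIntLinearMap → f.toIntLinearMap b = 0 := by
      intro b hb
      obtain ⟨a, rfl⟩ := (h b).1 hb
      exact DFunLike.congr_fun hf a
    let fbar := Submodule.liftQ (LinearMap.ker v.toIntLinearMap) f.toIntLinearMap
      (fun b hb => hker b hb)
    let h₀ : LinearMap.range v.toIntLinearMap →ₗ[ℤ] AddCircle (1 : ℚ) :=
      fbar ∘ₗ (v.toIntLinearMap.quotKerEquivRange.symm : _ →ₗ[ℤ] _)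
    obtain ⟨g, hg⟩ := CharacterModule.dual_surjective_of_injective
      (LinearMap.range v.toIntLinearMap).subtype Subtype.val_injective
      (h₀.toAddMonoidHom : CharacterModule (LinearMap.range v.toIntLinearMap))
    refine ⟨g, ?_⟩
    ext b
    have h1 : g (v b) = h₀ ⟨v b, ⟨b, rfl⟩⟩ := by
      have := DFunLike.congr_fun hg (⟨v b, ⟨b, rfl⟩⟩ : LinearMap.range v.toIntLinearMap)
      exact this
    have h2 : (v.toIntLinearMap.quotKerEquivRange.symm ⟨v b, ⟨b, rfl⟩⟩ : _) =
        Submodule.Quotient.mk b := by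
      exact v.toIntLinearMap.quotKerEquivRange_symm_apply_image b ⟨b, rfl⟩
    show g (v b) = f b
    rw [h1]
    show fbar (v.toIntLinearMap.quotKerEquivRange.symm ⟨v b, ⟨b, rfl⟩⟩) = f b
    rw [h2]
    rfl
  · rintro ⟨g, rfl⟩
    ext a
    show g (v (u a)) = 0
    rw [h.apply_apply_eq_zero a, map_zero]

theorem exact_of_exact_cdual {A B C : Type*} [AddCommGroup A] [AddCommGroup B] [AddCommGroup C]
    {u : A →+ B} {v : B →+ C} (h : Function.Exact (cdual v) (cdual u)) :
    Function.Exact u v := by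
  intro b
  constructor
  · intro hb
    by_contra hmem
    have hb' : (QuotientAddGroup.mk b : B ⧸ u.range) ≠ 0 := by
      simpa [QuotientAddGroup.eq_zero_iff] using hmem
    obtain ⟨χ, hχ⟩ := CharacterModule.exists_character_apply_ne_zero_of_ne_zero hb'
    set f : CharacterModule B := (χ : (B ⧸ u.range) →+ _).comp (QuotientAddGroup.mk' u.range)
    have hf : cdual u f = 0 := by
      ext a
      show χ (QuotientAddGroup.mk (u a)) = 0
      rw [(QuotientAddGroup.eq_zero_iff _).2 (AddMonoidHom.mem_range.2 ⟨a, rfl⟩), map_zero]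
    obtain ⟨g, hg⟩ := (h f).1 hf
    apply hχ
    have : f b = g (v b) := (DFunLike.congr_fun hg b).symm
    show χ (QuotientAddGroup.mk b) = 0
    rw [show χ (QuotientAddGroup.mk b) = f b from rfl, this, hb, map_zero]
  · rintro ⟨a, rfl⟩
    apply CharacterModule.eq_zero_of_character_apply
    intro c
    have : cdual u (cdual v c) = 0 := (h (cdual v c)).2 ⟨c, rfl⟩
    exact DFunLike.congr_fun this a


section Theta

variable {R : Type u} [Ring R] {M : Type u} [AddCommGroup M] [Module R M]

/-- Precomposition with an `R`-linear map, as an additive map on hom groups. -/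
def precompHom {P P' : Type u} [AddCommGroup P] [Module R P] [AddCommGroup P'] [Module R P']
    (ψ : P →ₗ[R] P') : (P' →ₗ[R] M) →+ (P →ₗ[R] M) where
  toFun χ := χ.comp ψ
  map_zero' := LinearMap.zero_comp ψ
  map_add' χ χ' := LinearMap.add_comp _ _ _

@[simp] lemma precompHom_apply {P P' : Type u} [AddCommGroup P] [Module R P] [AddCommGroup P']
    [Module R P'] (ψ : P →ₗ[R] P') (χ : P' →ₗ[R] M) (p : P) :
    precompHom ψ χ p = χ (ψ p) := rfl

/-- The elementary character `φ ↦ f (φ p)`. -/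
def thetaChar (P : Type u) [AddCommGroup P] [Module R P] (f : CharacterModule M) (p : P) :
    CharacterModule (P →ₗ[R] M) where
  toFun φ := f (φ p)
  map_zero' := by simp [LinearMap.zero_apply]
  map_add' φ φ' := by simp [LinearMap.add_apply]

@[simp] lemma thetaChar_apply (P : Type u) [AddCommGroup P] [Module R P]
    (f : CharacterModule M) (p : P) (φ : P →ₗ[R] M) :
    thetaChar P f p φ = f (φ p) := rfl

/-- The pairing on the plain tensor product. -/
def theta0 (P : Type u) [AddCommGroup P] [Module R P] :
    (CharacterModule M) ⊗[ℤ] P →ₗ[ℤ] CharacterModule (P →ₗ[R] M) :=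
  TensorProduct.lift <| LinearMap.mk₂ ℤ (thetaChar P)
    (fun f f' p => by ext φ; rfl)
    (fun z f p => by ext φ; rfl)
    (fun f p p' => by
      ext φ
      show f (φ (p + p')) = f (φ p) + f (φ p')
      rw [φ.map_add, map_add f])
    (fun z f p => by
      ext φ
      show f (φ (z • p)) = z • f (φ p)
      rw [map_zsmul φ, map_zsmul f])

@[simp] lemma theta0_tmul (P : Type u) [AddCommGroup P] [Module R P]
    (f : CharacterModule M) (p : P) :
    theta0 (R := R) (M := M) P (f ⊗ₜ[ℤ] p) = thetaChar P f p := rfl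

/-- The comparison map `M⋆ ⊗_R P →+ (Hom_R(P, M))⋆`. -/
def theta (P : Type u) [AddCommGroup P] [Module R P] :
    RTensor R (CharacterModule M) P →+ CharacterModule (P →ₗ[R] M) :=
  QuotientAddGroup.lift (balRel R (CharacterModule M) P) (theta0 (R := R) (M := M) P).toAddMonoidHom <| by
    intro y hy
    have hle : balRel R (CharacterModule M) P ≤
        (theta0 (R := R) (M := M) P).toAddMonoidHom.ker := by
      rw [balRel, AddSubgroup.closure_le]
      rintro _ ⟨f, r, p, rfl⟩
      simp only [SetLike.mem_coe, AddMonoidHom.mem_ker, LinearMap.toAddMonoidHom_coe,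
        map_sub, theta0_tmul]
      ext φ
      show f (r • φ p) - f (φ (r • p)) = 0
      rw [← φ.map_smul, sub_self]
    exact hle hy

@[simp] lemma theta_mk_tmul (P : Type u) [AddCommGroup P] [Module R P]
    (f : CharacterModule M) (p : P) (φ : P →ₗ[R] M) :
    theta P (QuotientAddGroup.mk (f ⊗ₜ[ℤ] p) : RTensor R (CharacterModule M) P) φ
      = f (φ p) := rfl

lemma theta_natural {P P' : Type u} [AddCommGroup P] [Module R P] [AddCommGroup P']
    [Module R P'] (ψ : P →ₗ[R] P') (z : RTensor R (CharacterModule M) P) :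
    theta P' (balMapRight (CharacterModule M) ψ z) = cdual (precompHom ψ) (theta P z) := by
  refine QuotientAddGroup.induction_on z fun y => ?_
  rw [balMapRight_mk]
  refine TensorProduct.induction_on y (by
      rw [map_zero]
      exact (map_zero (theta (R := R) (M := M) P')).trans ((map_zero (cdual (precompHom ψ))).symm.trans
        (congrArg _ (map_zero (theta (R := R) (M := M) P)).symm))) (fun f p => ?_) (fun s t hs ht => ?_)
  · ext φ
    rfl
  · rw [map_add, QuotientAddGroup.mk_add, QuotientAddGroup.mk_add]
    exact (map_add (theta (R := R) (M := M) P') _ _).trans ((congrArg₂ (· + ·) hs ht).trans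
      ((map_add (cdual (precompHom ψ)) _ _).symm.trans (congrArg _ (map_add (theta (R := R) (M := M) P) _ _).symm)))

/-- `r ↦ r • m` as a linear map. -/
def spanMap (m : M) : R →ₗ[R] M where
  toFun r := r • m
  map_add' r r' := add_smul r r' m
  map_smul' r r' := mul_smul r r' m

/-- `m ↦ (p ↦ χ p • m)` as an additive map. -/
def spanComp {P : Type u} [AddCommGroup P] [Module R P] (χ : P →ₗ[R] R) :
    M →+ (P →ₗ[R] M) where
  toFun m := (spanMap m).comp χ
  map_zero' := by ext p; simp [spanMap]
  map_add' m m' := by ext p; simp [spanMap, smul_add]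

@[simp] lemma spanComp_apply {P : Type u} [AddCommGroup P] [Module R P] (χ : P →ₗ[R] R)
    (m : M) (p : P) : spanComp χ m p = χ p • m := rfl

lemma mk_op_smul_tmul (P : Type u) [AddCommGroup P] [Module R P]
    (f : CharacterModule M) (r : R) (p : P) :
    (QuotientAddGroup.mk ((MulOpposite.op r • f) ⊗ₜ[ℤ] p) :
        RTensor R (CharacterModule M) P)
      = QuotientAddGroup.mk (f ⊗ₜ[ℤ] (r • p)) := by
  rw [QuotientAddGroup.eq]
  have : -((MulOpposite.op r • f) ⊗ₜ[ℤ] p) + f ⊗ₜ[ℤ] (r • p)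
      = -((MulOpposite.op r • f) ⊗ₜ[ℤ] p - f ⊗ₜ[ℤ] (r • p)) := by abel
  rw [this]
  exact neg_mem (AddSubgroup.subset_closure ⟨f, r, p, rfl⟩)

section DualBasis

variable (R)

lemma exists_dual_basis (P : Type u) [AddCommGroup P] [Module R P] [Module.Finite R P]
    [Module.Projective R P] :
    ∃ (k : ℕ) (x : Fin k → P) (χ : Fin k → (P →ₗ[R] R)),
      ∀ p : P, ∑ j, χ j p • x j = p := by
  obtain ⟨k, v, hv⟩ := Module.Finite.exists_fin (R := R) (M := P)
  let π : (Fin k → R) →ₗ[R] P :=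
    { toFun := fun c => ∑ j, c j • v j
      map_add' := fun c c' => by
        simp [add_smul, Finset.sum_add_distrib]
      map_smul' := fun r c => by
        simp [mul_smul, Finset.smul_sum] }
  have hπ : Function.Surjective π := by
    rw [← LinearMap.range_eq_top]
    rw [← top_le_iff, ← hv, Submodule.span_le]
    rintro _ ⟨j, rfl⟩
    refine ⟨Pi.single j 1, ?_⟩
    have hπc : ∀ c : Fin k → R, π c = ∑ i, c i • v i := fun _ => rfl
    rw [hπc]
    rw [Finset.sum_eq_single j (fun i _ hij => by simp [Pi.single_apply, hij]) (by simp)]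
    simp
  obtain ⟨s, hs⟩ := Module.projective_lifting_property π LinearMap.id hπ
  refine ⟨k, v, fun j => (LinearMap.proj j).comp s, fun p => ?_⟩
  have := DFunLike.congr_fun hs p
  exact this

end DualBasis

lemma theta_bijective (P : Type u) [AddCommGroup P] [Module R P] [Module.Finite R P]
    [Module.Projective R P] :
    Function.Bijective (theta (R := R) (M := M) P) := by
  obtain ⟨k, x, χ, hxχ⟩ := exists_dual_basis R P
  -- the inverse map
  let eta : CharacterModule (P →ₗ[R] M) →+ RTensor R (CharacterModule M) P :=
    { toFun := fun g => ∑ j, (QuotientAddGroup.mk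
        (((g : (P →ₗ[R] M) →+ _).comp (spanComp (χ j))) ⊗ₜ[ℤ] x j) :
          RTensor R (CharacterModule M) P)
      map_zero' := by
        refine Finset.sum_eq_zero fun j _ => ?_
        rw [show AddMonoidHom.comp (0 : CharacterModule (P →ₗ[R] M)) (spanComp (χ j))
          = (0 : CharacterModule M) from rfl, TensorProduct.zero_tmul]
        rfl
      map_add' := fun g g' => by
        refine Eq.trans (Finset.sum_congr rfl fun j _ => ?_) Finset.sum_add_distrib
        rw [show AddMonoidHom.comp (g + g' : CharacterModule (P →ₗ[R] M)) (spanComp (χ j))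
          = (AddMonoidHom.comp g (spanComp (χ j)) : CharacterModule M)
            + AddMonoidHom.comp g' (spanComp (χ j)) from rfl]
        exact (congrArg (QuotientAddGroup.mk (s := balRel R (CharacterModule M) P))
          (TensorProduct.add_tmul (M := CharacterModule M) (AddMonoidHom.comp g (spanComp (χ j)))
            (AddMonoidHom.comp g' (spanComp (χ j))) (x j))).trans (QuotientAddGroup.mk_add _ _ _) }
  have hright : ∀ g, theta (R := R) P (eta g) = g := by
    intro g
    ext φ
    have h0 : theta (R := R) P (eta g)
        = ∑ j, thetaChar P ((g : (P →ₗ[R] M) →+ _).comp (spanComp (χ j))) (x j) := by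
      show theta (R := R) P (∑ j, (QuotientAddGroup.mk
        (((g : (P →ₗ[R] M) →+ _).comp (spanComp (χ j))) ⊗ₜ[ℤ] x j) :
          RTensor R (CharacterModule M) P)) = _
      refine (map_sum (theta (R := R) (M := M) P) _ _).trans ?_
      rfl
    have h1 : theta (R := R) P (eta g) φ = ∑ j, g ((spanMap (φ (x j))).comp (χ j)) := by
      rw [h0]
      exact AddMonoidHom.finset_sum_apply (fun j => (thetaChar P ((g : (P →ₗ[R] M) →+ _).comp
        (spanComp (χ j))) (x j) : (P →ₗ[R] M) →+ AddCircle (1 : ℚ))) Finset.univ φ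
    rw [h1, ← map_sum]
    congr 1
    ext p
    rw [LinearMap.sum_apply]
    calc ∑ j, ((spanMap (φ (x j))).comp (χ j)) p
        = ∑ j, φ (χ j p • x j) := by
          refine Finset.sum_congr rfl fun j _ => ?_
          exact (φ.map_smul _ _).symm
      _ = φ (∑ j, χ j p • x j) := by rw [map_sum]
      _ = φ p := by rw [hxχ]
  have hleft : ∀ z, eta (theta P z) = z := by
    intro z
    refine QuotientAddGroup.induction_on z fun y => ?_
    refine TensorProduct.induction_on y (by
      exact (congrArg eta (map_zero (theta (R := R) (M := M) P))).trans (map_zero eta))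
      (fun f p => ?_) (fun s t hs ht => ?_)
    · have h2 : ∀ j, ((theta (R := R) P (QuotientAddGroup.mk (f ⊗ₜ[ℤ] p)) :
          (P →ₗ[R] M) →+ _).comp (spanComp (χ j))) = MulOpposite.op (χ j p) • f := by
        intro j
        ext m
        show f ((spanMap m).comp (χ j) p) = f (χ j p • m)
        rfl
      calc (id (eta (theta (R := R) P (QuotientAddGroup.mk (f ⊗ₜ[ℤ] p)))) :
            (CharacterModule M ⊗[ℤ] P) ⧸ balRel R (CharacterModule M) P)
          = ∑ j, (QuotientAddGroup.mk
            (((theta (R := R) P (QuotientAddGroup.mk (f ⊗ₜ[ℤ] p)) :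
              (P →ₗ[R] M) →+ _).comp (spanComp (χ j))) ⊗ₜ[ℤ] x j) :
              RTensor R (CharacterModule M) P) := rfl
        _ = ∑ j, (QuotientAddGroup.mk ((MulOpposite.op (χ j p) • f) ⊗ₜ[ℤ] x j) :
              RTensor R (CharacterModule M) P) := by
            refine Finset.sum_congr rfl fun j _ => ?_
            rw [h2 j]
        _ = ∑ j, (QuotientAddGroup.mk (f ⊗ₜ[ℤ] (χ j p • x j)) :
              RTensor R (CharacterModule M) P) := by
            exact Finset.sum_congr rfl fun j _ => mk_op_smul_tmul P f (χ j p) (x j)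
        _ = QuotientAddGroup.mk (f ⊗ₜ[ℤ] p) := by
            have he : (QuotientAddGroup.mk (f ⊗ₜ[ℤ] p) : RTensor R (CharacterModule M) P)
                = QuotientAddGroup.mk (f ⊗ₜ[ℤ] (∑ j, χ j p • x j)) := by rw [hxχ p]
            rw [he, TensorProduct.tmul_sum]
            exact (map_sum (QuotientAddGroup.mk' (balRel R (CharacterModule M) P))
              (fun j => f ⊗ₜ[ℤ] (χ j p • x j)) Finset.univ).symm
    · rw [QuotientAddGroup.mk_add]
      exact (congrArg eta (map_add (theta (R := R) (M := M) P) _ _)).trans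
        ((map_add eta _ _).trans (congrArg₂ (· + ·) hs ht))
  exact Function.bijective_iff_has_inverse.2 ⟨eta, hleft, hright⟩

end Theta

section Transfer

variable {A₂ A₁ A₀ B₂ B₁ B₀ : Type*} [AddCommGroup A₂] [AddCommGroup A₁] [AddCommGroup A₀]
  [AddCommGroup B₂] [AddCommGroup B₁] [AddCommGroup B₀]

lemma exact_iff_of_comm_bij (f₂ : A₂ →+ A₁) (f₁ : A₁ →+ A₀)
    (g₂ : B₂ →+ B₁) (g₁ : B₁ →+ B₀)
    (e₂ : A₂ →+ B₂) (e₁ : A₁ →+ B₁) (e₀ : A₀ →+ B₀)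
    (he₂ : Function.Bijective e₂) (he₁ : Function.Bijective e₁)
    (he₀ : Function.Injective e₀)
    (c₂ : ∀ a, e₁ (f₂ a) = g₂ (e₂ a)) (c₁ : ∀ a, e₀ (f₁ a) = g₁ (e₁ a)) :
    Function.Exact f₂ f₁ ↔ Function.Exact g₂ g₁ := by
  constructor
  · intro h b
    constructor
    · intro hb
      obtain ⟨a, rfl⟩ := he₁.2 b
      have h0 : e₀ (f₁ a) = 0 := by rw [c₁ a, hb]
      have hf : f₁ a = 0 := he₀ (by rw [h0, map_zero])
      obtain ⟨a', rfl⟩ := (h a).mp hf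
      exact ⟨e₂ a', (c₂ a').symm⟩
    · rintro ⟨b', rfl⟩
      obtain ⟨a', rfl⟩ := he₂.2 b'
      have hc : e₀ (f₁ (f₂ a')) = g₁ (g₂ (e₂ a')) := by rw [c₁ (f₂ a'), c₂ a']
      rw [← hc, h.apply_apply_eq_zero a', map_zero]
  · intro h a
    constructor
    · intro ha
      have h0 : g₁ (e₁ a) = 0 := by rw [← c₁ a, ha, map_zero]
      obtain ⟨b₂, hb₂⟩ := (h (e₁ a)).mp h0
      obtain ⟨a₂, rfl⟩ := he₂.2 b₂
      refine ⟨a₂, he₁.1 ?_⟩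
      rw [c₂ a₂, hb₂]
    · rintro ⟨a', rfl⟩
      apply he₀
      rw [map_zero, c₁ (f₂ a'), c₂ a', h.apply_apply_eq_zero (e₂ a')]
      

end Transfer

section Zero

universe w v

lemma moduleCat_subsingleton_iff_isZero {S : Type v} [Ring S] (X : ModuleCat.{w} S) :
    Subsingleton X ↔ IsZero X := by
  constructor
  · intro h
    exact ModuleCat.isZero_of_subsingleton X
  · intro h
    have h0 : (𝟙 X : X ⟶ X) = 0 := h.eq_of_src _ _
    have hz : ∀ x : X, x = 0 := fun x => congrArg (fun φ : X ⟶ X => φ x) h0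
    exact ⟨fun a b => (hz a).trans (hz b).symm⟩

lemma ab_subsingleton_iff_isZero (X : AddCommGrpCat.{u}) :
    Subsingleton X ↔ IsZero X := by
  constructor
  · intro h
    exact AddCommGrpCat.isZero_of_subsingleton X
  · intro h
    have h0 : (𝟙 X : X ⟶ X) = 0 := h.eq_of_src _ _
    have hz : ∀ x : X, x = 0 := fun x => congrArg (fun φ : X ⟶ X => φ x) h0
    exact ⟨fun a b => (hz a).trans (hz b).symm⟩

lemma moduleCat_exact_iff_function_exact {S : Type v} [Ring S]
    (C : ShortComplex (ModuleCat.{w} S)) :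
    C.Exact ↔ Function.Exact C.f C.g := by
  rw [ShortComplex.moduleCat_exact_iff]
  constructor
  · intro h y
    constructor
    · intro hy
      exact h y hy
    · rintro ⟨x, rfl⟩
      exact C.moduleCat_zero_apply x
  · intro h x hx
    exact (h x).mp hx

end Zero

section Resolution

variable {R : Type u} [Ring R]
variable (F : ℕ → ModuleCat.{u} R) (d : ∀ i, F (i + 1) ⟶ F i)

/-- The chain complex associated to the resolution data. -/
def resComplex (hdd : ∀ i, Function.Exact (d (i + 1)) (d i)) :
    ChainComplex (ModuleCat.{u} R) ℕ :=
  ChainComplex.of F d fun i => by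
    ext x
    exact (hdd i).apply_apply_eq_zero x

lemma resComplex_d (hdd : ∀ i, Function.Exact (d (i + 1)) (d i)) (i : ℕ) :
    (resComplex F d hdd).d (i + 1) i = d i :=
  ChainComplex.of_d F d i

/-- The augmentation map to the single complex. -/
def resPi (U : ModuleCat.{u} R) (ε : F 0 →ₗ[R] U)
    (hex0 : Function.Exact (d 0) ε) (hdd : ∀ i, Function.Exact (d (i + 1)) (d i)) :
    resComplex F d hdd ⟶ (ChainComplex.single₀ (ModuleCat.{u} R)).obj U :=
  (ChainComplex.toSingle₀Equiv (resComplex F d hdd) U).symm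
    ⟨ModuleCat.ofHom ε, by
      rw [show (resComplex F d hdd).d 1 0 = d 0 from ChainComplex.of_d F d 0]
      ext x
      exact hex0.apply_apply_eq_zero x⟩

lemma resPi_f_zero (U : ModuleCat.{u} R) (ε : F 0 →ₗ[R] U)
    (hex0 : Function.Exact (d 0) ε) (hdd : ∀ i, Function.Exact (d (i + 1)) (d i)) :
    (resPi F d U ε hex0 hdd).f 0 = ModuleCat.ofHom ε :=
  ChainComplex.toSingle₀Equiv_symm_apply_f_zero _ _

/-- The resolution data assembles into a projective resolution. -/
def resolution (U : ModuleCat.{u} R) (ε : F 0 →ₗ[R] U)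
    (hproj : ∀ i, Module.Projective R (F i)) (hsurj : Function.Surjective ε)
    (hex0 : Function.Exact (d 0) ε) (hdd : ∀ i, Function.Exact (d (i + 1)) (d i)) :
    ProjectiveResolution U where
  complex := resComplex F d hdd
  projective i := (IsProjective.iff_projective (F i)).1 (hproj i)
  π := resPi F d U ε hex0 hdd
  quasiIso := ⟨fun i => by
    match i with
    | 0 =>
      rw [quasiIsoAt_iff' _ 1 0 0 (by simp) (by simp)]
      have hg₁ : ((resComplex F d hdd).sc' 1 0 0).g = 0 := by
        show (resComplex F d hdd).d 0 0 = 0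
        exact (resComplex F d hdd).shape 0 0 (by simp)
      have hf₂ : (((ChainComplex.single₀ (ModuleCat.{u} R)).obj U).sc' 1 0 0).f = 0 := by
        show ((ChainComplex.single₀ (ModuleCat.{u} R)).obj U).d 1 0 = 0
        apply HomologicalComplex.single_obj_d
      have hg₂ : (((ChainComplex.single₀ (ModuleCat.{u} R)).obj U).sc' 1 0 0).g = 0 := by
        show ((ChainComplex.single₀ (ModuleCat.{u} R)).obj U).d 0 0 = 0
        apply HomologicalComplex.single_obj_d
      rw [ShortComplex.quasiIso_iff_of_zeros' _ hg₁ hf₂ hg₂]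
      have hπ0 : (resPi F d U ε hex0 hdd).f 0 = ModuleCat.ofHom ε := resPi_f_zero F d U ε hex0 hdd
      constructor
      · rw [moduleCat_exact_iff_function_exact]
        show Function.Exact ⇑((resComplex F d hdd).d 1 0) ⇑((resPi F d U ε hex0 hdd).f 0)
        rw [show (resComplex F d hdd).d 1 0 = d 0 from ChainComplex.of_d F d 0, hπ0]
        exact hex0
      · show Epi ((resPi F d U ε hex0 hdd).f 0)
        rw [ModuleCat.epi_iff_surjective, hπ0]
        exact hsurj
    | i + 1 =>
      rw [quasiIsoAt_iff_exactAt' _ (i + 1) (ChainComplex.exactAt_succ_single_obj U i)]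
      rw [HomologicalComplex.exactAt_iff' _ (i + 2) (i + 1) i (by simp) (by simp)]
      rw [moduleCat_exact_iff_function_exact]
      show Function.Exact ⇑((resComplex F d hdd).d (i + 2) (i + 1))
        ⇑((resComplex F d hdd).d (i + 1) i)
      rw [show (resComplex F d hdd).d (i + 2) (i + 1) = d (i + 1) from
        ChainComplex.of_d F d (i + 1),
        show (resComplex F d hdd).d (i + 1) i = d i from ChainComplex.of_d F d i]
      exact hdd i⟩

end Resolution

section Key

open NWeak

lemma key (R : Type u) [Ring R] (n : ℕ) (M : Type u) [AddCommGroup M] [Module R M]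
    (U : ModuleCat.{u} R) (hU : IsNSuperFP R n ↑U) :
    extVanish R (n + 1) ↑U M ↔ torVanish R (n + 1) (CharacterModule M) ↑U := by
  obtain ⟨F, d, ε, hproj, hfin, hsurj, hex0, hdd⟩ := hU
  haveI : Module.Finite R ↑(F n) := hfin n le_rfl
  haveI : Module.Finite R ↑(F (n + 1)) := hfin (n + 1) (by omega)
  haveI : Module.Finite R ↑(F (n + 2)) := hfin (n + 2) (by omega)
  haveI : Module.Projective R ↑(F n) := hproj n
  haveI : Module.Projective R ↑(F (n + 1)) := hproj (n + 1)
  haveI : Module.Projective R ↑(F (n + 2)) := hproj (n + 2)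
  set P := resolution F d U ε hproj hsurj hex0 hdd with hPdef
  set Y : ModuleCat.{u} R := ModuleCat.of R M with hY
  have hPd : ∀ i, P.complex.d (i + 1) i = d i := fun i => resComplex_d F d hdd i
  -- Ext side
  have extIff : extVanish R (n + 1) ↑U M ↔
      Function.Exact ⇑(precompHom (M := M) (d n).hom) ⇑(precompHom (M := M) (d (n + 1)).hom) := by
    have e1 : ∀ χ, ModuleCat.homAddEquiv (((P.complex.linearYonedaObj ℤ Y).sc' n (n + 1) (n + 2)).f χ)
        = precompHom (M := M) (d n).hom (ModuleCat.homAddEquiv χ) := by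
      intro χ
      show (P.complex.d (n + 1) n ≫ χ).hom = (precompHom (M := M) (d n).hom) χ.hom
      rw [hPd n]
      rfl
    have e2 : ∀ χ, ModuleCat.homAddEquiv (((P.complex.linearYonedaObj ℤ Y).sc' n (n + 1) (n + 2)).g χ)
        = precompHom (M := M) (d (n + 1)).hom (ModuleCat.homAddEquiv χ) := by
      intro χ
      show (P.complex.d (n + 2) (n + 1) ≫ χ).hom = (precompHom (M := M) (d (n + 1)).hom) χ.hom
      rw [hPd (n + 1)]
      rfl
    show Subsingleton (((Ext ℤ (ModuleCat.{u} R) (n + 1)).obj (Opposite.op U)).obj Y) ↔ _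
    calc Subsingleton (((Ext ℤ (ModuleCat.{u} R) (n + 1)).obj (Opposite.op U)).obj Y)
        ↔ IsZero (((Ext ℤ (ModuleCat.{u} R) (n + 1)).obj (Opposite.op U)).obj Y) :=
          moduleCat_subsingleton_iff_isZero _
      _ ↔ IsZero ((P.complex.linearYonedaObj ℤ Y).homology (n + 1)) :=
          (P.isoExt (n + 1) Y).isZero_iff
      _ ↔ (P.complex.linearYonedaObj ℤ Y).ExactAt (n + 1) :=
          (HomologicalComplex.exactAt_iff_isZero_homology _ _).symm
      _ ↔ ((P.complex.linearYonedaObj ℤ Y).sc' n (n + 1) (n + 2)).Exact :=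
          HomologicalComplex.exactAt_iff' _ n (n + 1) (n + 2) (by simp) (by simp)
      _ ↔ Function.Exact ⇑(((P.complex.linearYonedaObj ℤ Y).sc' n (n + 1) (n + 2)).f)
            ⇑(((P.complex.linearYonedaObj ℤ Y).sc' n (n + 1) (n + 2)).g) :=
          moduleCat_exact_iff_function_exact _
      _ ↔ Function.Exact ⇑(precompHom (M := M) (d n).hom)
            ⇑(precompHom (M := M) (d (n + 1)).hom) :=
          exact_iff_of_comm_bij
            (((P.complex.linearYonedaObj ℤ Y).sc' n (n + 1) (n + 2)).f.hom.toAddMonoidHom)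
            (((P.complex.linearYonedaObj ℤ Y).sc' n (n + 1) (n + 2)).g.hom.toAddMonoidHom) _ _
            ModuleCat.homAddEquiv.toAddMonoidHom ModuleCat.homAddEquiv.toAddMonoidHom
            ModuleCat.homAddEquiv.toAddMonoidHom
            (AddEquiv.bijective _) (AddEquiv.bijective _) (AddEquiv.injective _) e1 e2
  -- Tor side
  have torIff : torVanish R (n + 1) (CharacterModule M) ↑U ↔
      Function.Exact ⇑(balMapRight (CharacterModule M) (d (n + 1)).hom)
        ⇑(balMapRight (CharacterModule M) (d n).hom) := by
    set T := tensorFunctor R (CharacterModule M) with hT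
    set K := (T.mapHomologicalComplex (ComplexShape.down ℕ)).obj P.complex with hK
    have t1 : ⇑((K.sc' (n + 2) (n + 1) n).f)
        = ⇑(balMapRight (CharacterModule M) (d (n + 1)).hom) := by
      funext z
      show T.map (P.complex.d (n + 2) (n + 1)) z = _
      rw [hPd (n + 1)]
      rfl
    have t2 : ⇑((K.sc' (n + 2) (n + 1) n).g)
        = ⇑(balMapRight (CharacterModule M) (d n).hom) := by
      funext z
      show T.map (P.complex.d (n + 1) n) z = _
      rw [hPd n]
      rfl
    calc torVanish R (n + 1) (CharacterModule M) ↑U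
        ↔ IsZero ((T.leftDerived (n + 1)).obj U) := ab_subsingleton_iff_isZero _
      _ ↔ IsZero (K.homology (n + 1)) := (P.isoLeftDerivedObj T (n + 1)).isZero_iff
      _ ↔ K.ExactAt (n + 1) := (HomologicalComplex.exactAt_iff_isZero_homology _ _).symm
      _ ↔ (K.sc' (n + 2) (n + 1) n).Exact :=
          HomologicalComplex.exactAt_iff' _ (n + 2) (n + 1) n (by simp) (by simp)
      _ ↔ Function.Exact ⇑((K.sc' (n + 2) (n + 1) n).f) ⇑((K.sc' (n + 2) (n + 1) n).g) :=
          ShortComplex.ab_exact_iff_function_exact _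
      _ ↔ _ := by rw [t1, t2]; exact Iff.rfl
  rw [extIff, torIff]
  have hstep1 : Function.Exact ⇑(precompHom (M := M) (d n).hom) ⇑(precompHom (M := M) (d (n + 1)).hom)
      ↔ Function.Exact ⇑(cdual (precompHom (M := M) (d (n + 1)).hom))
          ⇑(cdual (precompHom (M := M) (d n).hom)) :=
    ⟨exact_cdual_of_exact, exact_of_exact_cdual⟩
  have hstep2 : Function.Exact
        ⇑(balMapRight (CharacterModule M) (d (n + 1)).hom)
        ⇑(balMapRight (CharacterModule M) (d n).hom)
      ↔ Function.Exact ⇑(cdual (precompHom (M := M) (d (n + 1)).hom))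
          ⇑(cdual (precompHom (M := M) (d n).hom)) := by
    refine exact_iff_of_comm_bij _ _ _ _
      (theta (R := R) (M := M) (F (n + 2))) (theta (R := R) (M := M) (F (n + 1)))
      (theta (R := R) (M := M) (F n))
      (theta_bijective _) (theta_bijective _) (theta_bijective _).1
      (fun z => theta_natural (d (n + 1)).hom z) (fun z => theta_natural (d n).hom z)
  rw [hstep1, hstep2]

end Key

end NWeakProof

open NWeak in
/-- A left `R`-module `M` is `n`-weak injective if and only if its
character module `M⋆ = Hom_ℤ(M, ℚ/ℤ)` is an `n`-weak flat right `R`-module. -/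
theorem isNWeakInjective_iff_isNWeakFlat_characterModule
    (R : Type u) [Ring R] (n : ℕ) (M : Type u) [AddCommGroup M] [Module R M] :
    IsNWeakInjective R n M ↔ IsNWeakFlat R n (CharacterModule M) := by
  constructor
  · intro h U hU
    exact (NWeakProof.key R n M U hU).mp (h U hU)
  · intro h U hU
    exact (NWeakProof.key R n M U hU).mpr (h U hU)
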